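/- Let N be a prime, s ≥ 1, let f : ℤ/Nℤ → ℂ have ‖f‖_{L²} ≤ 1, let ε₁, ε₂, ε₃, ε₄ > 0 satisfy ε₂^{-1}ε₃ + ε₄^{-1}ε₁ ≤ 1/2, and let η > 0. Then there exists a decomposition f = f₁ + f₂ + f₃ where: f₁ = Σ_j a_j D_{U^s}((f_{ω,j})) is a finite linear combination of dual U^s functions of one-bounded functions with Σ_j |a_j| ≤ η·(ε₁η)^{-2^s}; ‖f₂‖_{L¹} ≤ ε₂ + η; and ‖f₃‖_{L∞} ≤ ε₃^{-1} with ‖f₃‖_{U^s} ≤ ε₄. -/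

import Mathlib

open Finset Pointwise

noncomputable section

/-- The number of nonzero coordinates of `ω ∈ {0,1}^s`. -/
def wt {s : ℕ} (ω : Fin s → Bool) : ℕ := (Finset.univ.filter fun i => ω i = true).card

/-- `C^k z`: complex conjugation applied `k` times. -/
def cconj (k : ℕ) (z : ℂ) : ℂ := if Even k then z else (starRingEnd ℂ) z

/-- The Gowers `U^s` norm of `f : ZMod N → ℂ`. -/
def gowers {N : ℕ} [NeZero N] (s : ℕ) (f : ZMod N → ℂ) : ℝ :=
  (Norm.norm ((∑ x : ZMod N, ∑ h : Fin s → ZMod N,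
      ∏ ω : Fin s → Bool,
        cconj (wt ω) (f (x + ∑ i, if ω i then h i else 0))) / (N : ℂ) ^ (s + 1))) ^
    (((2 : ℝ) ^ s)⁻¹)

/-- The dual `U^s` function `D_{U^s}((f_ω))(x) = 𝔼_{h₁,…,h_s} ∏_{ω∈{0,1}^s_*} f_ω(x + ω·h)`. -/
def dualUs {N : ℕ} [NeZero N] (s : ℕ) (F : (Fin s → Bool) → ZMod N → ℂ)
    (x : ZMod N) : ℂ :=
  (∑ h : Fin s → ZMod N,
    ∏ ω ∈ Finset.univ.filter (fun ω : Fin s → Bool => ω ≠ fun _ => false),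
      F ω (x + ∑ i, if ω i then h i else 0)) / (N : ℂ) ^ s

/-- `‖f‖_{L¹} = 𝔼_x |f(x)|`. -/
def L1norm {N : ℕ} [NeZero N] (f : ZMod N → ℂ) : ℝ :=
  (∑ x : ZMod N, Norm.norm (f x)) / (N : ℝ)

/-- `‖f‖_{L²} = (𝔼_x |f(x)|²)^{1/2}`. -/
def L2norm {N : ℕ} [NeZero N] (f : ZMod N → ℂ) : ℝ :=
  Real.sqrt ((∑ x : ZMod N, Norm.norm (f x) ^ 2) / (N : ℝ))

/-- `‖f‖_{L∞} = max_x |f(x)|`. -/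
def Linfnorm {N : ℕ} [NeZero N] (f : ZMod N → ℂ) : ℝ :=
  ⨆ x : ZMod N, Norm.norm (f x)

namespace Stmt7Aux

lemma abs_cconj (k : ℕ) (z : ℂ) : Norm.norm (cconj k z) = Norm.norm z := by
  unfold cconj; split <;> simp

lemma conj_dualUs {N : ℕ} [NeZero N] (s : ℕ) (F : (Fin s → Bool) → ZMod N → ℂ) (x : ZMod N) :
    (starRingEnd ℂ) (dualUs s F x) = dualUs s (fun ω y => (starRingEnd ℂ) (F ω y)) x := by
  unfold dualUs
  rw [map_div₀, map_sum]
  congr 1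
  · exact Finset.sum_congr rfl fun h _ => by rw [map_prod]
  · rw [map_pow, map_natCast]

lemma continuous_dualUs {N : ℕ} [NeZero N] (s : ℕ) (x : ZMod N) :
    Continuous fun F : (Fin s → Bool) → ZMod N → ℂ => dualUs s F x := by
  unfold dualUs
  apply Continuous.div_const
  apply continuous_finset_sum
  intro h _
  apply continuous_finset_prod
  intro ω _
  exact (continuous_apply _).comp (continuous_apply ω)

lemma filter_ne_eq_erase (s : ℕ) :
    (Finset.univ.filter (fun ω : Fin s → Bool => ω ≠ fun _ => false)) =
      Finset.univ.erase (fun _ => false) := by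
  ext ω; simp [Finset.mem_erase, and_comm]

lemma card_erase (s : ℕ) :
    ((Finset.univ : Finset (Fin s → Bool)).erase (fun _ => false)).card = 2 ^ s - 1 := by
  rw [Finset.card_erase_of_mem (mem_univ _), Finset.card_univ, Fintype.card_fun,
    Fintype.card_bool, Fintype.card_fin]

lemma abs_dualUs_le_one {N : ℕ} [NeZero N] (s : ℕ) (F : (Fin s → Bool) → ZMod N → ℂ)
    (hF : ∀ ω x, Norm.norm (F ω x) ≤ 1) (x : ZMod N) :
    Norm.norm (dualUs s F x) ≤ 1 := by
  have hN : (0:ℝ) < (N:ℝ) := by exact_mod_cast (NeZero.pos N)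
  unfold dualUs
  rw [norm_div, norm_pow, Complex.norm_natCast]
  rw [div_le_one (by positivity)]
  calc Norm.norm (∑ h : Fin s → ZMod N, ∏ ω ∈ Finset.univ.filter
        (fun ω : Fin s → Bool => ω ≠ fun _ => false), F ω (x + ∑ i, if ω i then h i else 0))
      ≤ ∑ h : Fin s → ZMod N, Norm.norm (∏ ω ∈ Finset.univ.filter
        (fun ω : Fin s → Bool => ω ≠ fun _ => false), F ω (x + ∑ i, if ω i then h i else 0)) :=
        norm_sum_le _ _
    _ ≤ ∑ _h : Fin s → ZMod N, (1:ℝ) := by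
        apply Finset.sum_le_sum
        intro h _
        rw [norm_prod]
        exact Finset.prod_le_one (fun ω _ => norm_nonneg _) (fun ω _ => hF _ _)
    _ = ((Fintype.card (Fin s → ZMod N) : ℝ)) := by rw [Finset.sum_const, Finset.card_univ]; simp
    _ ≤ (N:ℝ) ^ s := le_of_eq (by rw [Fintype.card_fun, Fintype.card_fin, ZMod.card]; push_cast; ring)

lemma abs_le_of_re_le (w : ℂ) (r : ℝ) (hr : 0 ≤ r)
    (h : ∀ z : ℂ, Norm.norm z ≤ 1 → (z * w).re ≤ r) : Norm.norm w ≤ r := by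
  rcases eq_or_ne w 0 with rfl | hw
  · simpa using hr
  · have habs : (0:ℝ) < Norm.norm w := norm_pos_iff.mpr hw
    have hz : Norm.norm ((starRingEnd ℂ) w / ((Norm.norm w : ℝ) : ℂ)) ≤ 1 := by
      rw [norm_div, Complex.norm_conj, Complex.norm_real, Real.norm_eq_abs, abs_of_pos habs, div_self habs.ne']
    have h2 := h _ hz
    have h3 : (starRingEnd ℂ) w / ((Norm.norm w : ℝ) : ℂ) * w = ((Norm.norm w : ℝ) : ℂ) := by
      rw [div_mul_eq_mul_div, mul_comm, Complex.mul_conj]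
      rw [show (Complex.normSq w : ℂ) = ((Norm.norm w ^ 2 : ℝ) : ℂ) by
        rw [Complex.sq_norm]]
      rw [← Complex.ofReal_div]
      congr 1
      field_simp
    rw [h3] at h2
    simpa using h2

lemma exists_rep {N : ℕ} [NeZero N] (L : (ZMod N → ℂ) →L[ℝ] ℝ) :
    ∃ ψ : ZMod N → ℂ, ∀ u : ZMod N → ℂ, L u = (∑ x, u x * ψ x).re := by
  classical
  refine ⟨fun x => ((L (fun y => if y = x then 1 else 0) : ℝ) : ℂ) -
      ((L (fun y => if y = x then Complex.I else 0) : ℝ) : ℂ) * Complex.I, fun u => ?_⟩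
  have hdecomp : u = ∑ x : ZMod N, ((u x).re • (fun y => if y = x then (1:ℂ) else 0)
      + (u x).im • (fun y => if y = x then Complex.I else 0)) := by
    funext y
    rw [Finset.sum_apply]
    rw [Finset.sum_eq_single y]
    · simp [Complex.real_smul, Complex.re_add_im]
    · intro b _ hb
      have hyb : y ≠ b := Ne.symm hb
      simp [hyb]
    · intro hy; exact absurd (mem_univ y) hy
  calc L u = ∑ x, ((u x).re * L (fun y => if y = x then 1 else 0)
        + (u x).im * L (fun y => if y = x then Complex.I else 0)) := by
        conv_lhs => rw [hdecomp]
        rw [map_sum]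
        exact Finset.sum_congr rfl fun x _ => by rw [map_add, map_smul, map_smul]; simp
    _ = (∑ x, u x * (((L (fun y => if y = x then 1 else 0) : ℝ) : ℂ) -
        ((L (fun y => if y = x then Complex.I else 0) : ℝ) : ℂ) * Complex.I)).re := by
        rw [Complex.re_sum]
        apply Finset.sum_congr rfl
        intro x _
        set p : ℝ := L (fun y => if y = x then 1 else 0)
        set q : ℝ := L (fun y => if y = x then Complex.I else 0)
        have : ((p:ℂ) - (q:ℂ)*Complex.I).re = p ∧ ((p:ℂ) - (q:ℂ)*Complex.I).im = -q := by
          constructor <;> simp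
        rw [Complex.mul_re, this.1, this.2]
        ring

lemma gowers_le {N : ℕ} [NeZero N] (s : ℕ) (g : ZMod N → ℂ) (m e : ℝ) (hm : 0 < m) (he : 0 < e)
    (hg : ∀ x, Norm.norm (g x) ≤ m⁻¹)
    (h : ∀ F : (Fin s → Bool) → ZMod N → ℂ, (∀ ω x, Norm.norm (F ω x) ≤ 1) →
      Norm.norm (∑ x, g x * dualUs s F x) ≤ (N : ℝ) * (e ^ (2 ^ s) * m ^ (2 ^ s - 1))) :
    gowers s g ≤ e := by
  classical
  have hN : (0:ℝ) < (N:ℝ) := by exact_mod_cast (NeZero.pos N)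
  have hNs : ((N:ℂ) ^ s) ≠ 0 := by
    apply pow_ne_zero
    exact_mod_cast (NeZero.ne N)
  set F : (Fin s → Bool) → ZMod N → ℂ := fun ω y => ((m:ℝ) : ℂ) * cconj (wt ω) (g y) with hF
  have hFb : ∀ ω x, Norm.norm (F ω x) ≤ 1 := by
    intro ω x
    rw [hF]
    simp only
    rw [norm_mul, Complex.norm_real, Real.norm_eq_abs, abs_of_pos hm, abs_cconj]
    calc m * Norm.norm (g x) ≤ m * m⁻¹ := by
          exact mul_le_mul_of_nonneg_left (hg x) hm.le
      _ = 1 := mul_inv_cancel₀ hm.ne'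
  have hFval : ∀ ω y, ((m:ℝ):ℂ)⁻¹ * F ω y = cconj (wt ω) (g y) := by
    intro ω y
    rw [hF]
    simp only
    rw [inv_mul_cancel_left₀ (by exact_mod_cast hm.ne' : ((m:ℝ):ℂ) ≠ 0)]
  have key : ∀ x : ZMod N, (∑ h : Fin s → ZMod N, ∏ ω : Fin s → Bool,
      cconj (wt ω) (g (x + ∑ i, if ω i then h i else 0)))
      = (((m:ℝ):ℂ)⁻¹ ^ (2 ^ s - 1) * (N:ℂ) ^ s) * (g x * dualUs s F x) := by
    intro x
    have hsplit : ∀ h : Fin s → ZMod N, (∏ ω : Fin s → Bool,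
        cconj (wt ω) (g (x + ∑ i, if ω i then h i else 0)))
        = g x * ∏ ω ∈ Finset.univ.erase (fun _ => false),
            cconj (wt ω) (g (x + ∑ i, if ω i then h i else 0)) := by
      intro h
      rw [← Finset.mul_prod_erase Finset.univ _ (mem_univ (fun _ => false : Fin s → Bool))]
      congr 1
      have h0 : wt (fun _ => false : Fin s → Bool) = 0 := by simp [wt]
      have h1 : (∑ i, if (fun _ => false : Fin s → Bool) i then h i else 0) = (0 : ZMod N) := by
        simp
      rw [h0, h1, add_zero]
      simp [cconj]
    calc (∑ h : Fin s → ZMod N, ∏ ω : Fin s → Bool,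
        cconj (wt ω) (g (x + ∑ i, if ω i then h i else 0)))
        = ∑ h : Fin s → ZMod N, g x * ∏ ω ∈ Finset.univ.erase (fun _ => false),
            cconj (wt ω) (g (x + ∑ i, if ω i then h i else 0)) :=
          Finset.sum_congr rfl fun h _ => hsplit h
      _ = ∑ h : Fin s → ZMod N, g x * (((m:ℝ):ℂ)⁻¹ ^ (2 ^ s - 1) *
            ∏ ω ∈ Finset.univ.erase (fun _ => false), F ω (x + ∑ i, if ω i then h i else 0)) := by
          apply Finset.sum_congr rfl
          intro h _
          congr 1
          rw [← card_erase s, ← Finset.prod_const (((m:ℝ):ℂ)⁻¹), ← Finset.prod_mul_distrib]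
          exact Finset.prod_congr rfl fun ω _ => (hFval ω _).symm
      _ = (((m:ℝ):ℂ)⁻¹ ^ (2 ^ s - 1) * (N:ℂ) ^ s) * (g x * dualUs s F x) := by
          rw [← Finset.mul_sum, ← Finset.mul_sum]
          have : (∑ h : Fin s → ZMod N, ∏ ω ∈ Finset.univ.erase (fun _ => false),
              F ω (x + ∑ i, if ω i then h i else 0)) = (N:ℂ) ^ s * dualUs s F x := by
            unfold dualUs
            rw [filter_ne_eq_erase s]
            field_simp
          rw [this]
          ring
  have hsum_eq : (∑ x : ZMod N, ∑ h : Fin s → ZMod N, ∏ ω : Fin s → Bool,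
      cconj (wt ω) (g (x + ∑ i, if ω i then h i else 0)))
      = (((m:ℝ):ℂ)⁻¹ ^ (2 ^ s - 1) * (N:ℂ) ^ s) * ∑ x, g x * dualUs s F x := by
    rw [Finset.mul_sum]
    exact Finset.sum_congr rfl fun x _ => key x
  have habs : Norm.norm ((∑ x : ZMod N, ∑ h : Fin s → ZMod N, ∏ ω : Fin s → Bool,
      cconj (wt ω) (g (x + ∑ i, if ω i then h i else 0))) / (N : ℂ) ^ (s + 1)) ≤ e ^ (2 ^ s) := by
    rw [hsum_eq, norm_div, norm_mul, norm_mul, norm_pow, norm_pow, norm_inv, Complex.norm_real, Real.norm_eq_abs,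
      abs_of_pos hm, Complex.norm_natCast, norm_pow, Complex.norm_natCast]
    rw [div_le_iff₀ (by positivity)]
    calc m⁻¹ ^ (2 ^ s - 1) * (N:ℝ) ^ s * Norm.norm (∑ x, g x * dualUs s F x)
        ≤ m⁻¹ ^ (2 ^ s - 1) * (N:ℝ) ^ s * ((N : ℝ) * (e ^ (2 ^ s) * m ^ (2 ^ s - 1))) := by
          apply mul_le_mul_of_nonneg_left (h F hFb) (by positivity)
      _ = e ^ (2 ^ s) * (N:ℝ) ^ (s + 1) * (m⁻¹ ^ (2 ^ s - 1) * m ^ (2 ^ s - 1)) := by ring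
      _ = e ^ (2 ^ s) * (N:ℝ) ^ (s + 1) := by
          rw [← mul_pow, inv_mul_cancel₀ hm.ne', one_pow, mul_one]
  have : gowers s g ≤ (e ^ (2 ^ s)) ^ (((2:ℝ) ^ s)⁻¹) := by
    unfold gowers
    exact Real.rpow_le_rpow (norm_nonneg _) habs (by positivity)
  calc gowers s g ≤ (e ^ (2 ^ s)) ^ (((2:ℝ) ^ s)⁻¹) := this
    _ = e := by
        rw [show ((2:ℝ) ^ s) = ((2 ^ s : ℕ) : ℝ) by push_cast; ring]
        exact Real.pow_rpow_inv_natCast he.le (by positivity)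

end Stmt7Aux


set_option maxHeartbeats 2000000 in
open Stmt7Aux in
theorem stmt7 (N : ℕ) [NeZero N] (hN : Nat.Prime N) (s : ℕ) (hs : 1 ≤ s)
    (f : ZMod N → ℂ) (hf : L2norm f ≤ 1)
    (ε₁ ε₂ ε₃ ε₄ : ℝ) (hε₁ : 0 < ε₁) (hε₂ : 0 < ε₂) (hε₃ : 0 < ε₃) (hε₄ : 0 < ε₄)
    (hsum : ε₂⁻¹ * ε₃ + ε₄⁻¹ * ε₁ ≤ 1 / 2) (η : ℝ) (hη : 0 < η) :
    ∃ (J : ℕ) (a : Fin J → ℂ) (Fam : Fin J → (Fin s → Bool) → ZMod N → ℂ)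
      (f₂ f₃ : ZMod N → ℂ),
      (∀ j ω x, Norm.norm (Fam j ω x) ≤ 1) ∧
      f = (fun x => ∑ j, a j * dualUs s (Fam j) x) + f₂ + f₃ ∧
      (∑ j, Norm.norm (a j)) ≤ η * ((ε₁ * η) ^ (2 ^ s))⁻¹ ∧
      L1norm f₂ ≤ ε₂ + η ∧
      Linfnorm f₃ ≤ ε₃⁻¹ ∧
      gowers s f₃ ≤ ε₄ := by
  classical
  have hN0 : (0:ℝ) < (N:ℝ) := by exact_mod_cast (NeZero.pos N)
  -- constants
  set m : ℝ := max ε₃ (η / 2) with hm_def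
  have hm0 : 0 < m := lt_max_of_lt_right (by linarith)
  set β : ℝ := ε₂ + η / 2 with hβ_def
  have hβ0 : 0 < β := by positivity
  set B₁ : ℝ := η * ((ε₁ * η) ^ (2 ^ s))⁻¹ with hB₁_def
  have hB₁0 : 0 < B₁ := by positivity
  set τ : ℝ := ε₄ ^ (2 ^ s) * m ^ (2 ^ s - 1) with hτ_def
  have hτ0 : 0 < τ := by positivity
  -- consequences of hsum
  have hε32 : ε₃ ≤ ε₂ / 2 := by
    have hpos : 0 < ε₄⁻¹ * ε₁ := by positivity
    have h1 : ε₂⁻¹ * ε₃ ≤ 1 / 2 := by linarith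
    have h2 := mul_le_mul_of_nonneg_left h1 hε₂.le
    rw [← mul_assoc, mul_inv_cancel₀ hε₂.ne', one_mul] at h2
    linarith
  have hε14 : 2 * ε₁ ≤ ε₄ := by
    have hpos : 0 < ε₂⁻¹ * ε₃ := by positivity
    have h1 : ε₄⁻¹ * ε₁ ≤ 1 / 2 := by linarith
    have h2 := mul_le_mul_of_nonneg_left h1 hε₄.le
    rw [← mul_assoc, mul_inv_cancel₀ hε₄.ne', one_mul] at h2
    linarith
  have hmβ : m ≤ β := by
    rw [hm_def]
    apply max_le
    · rw [hβ_def]; linarith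
    · rw [hβ_def]; linarith
  have hc1 : 1 ≤ m⁻¹ * β := by
    rw [show m⁻¹ * β = β / m by ring, le_div_iff₀ hm0]
    linarith
  have hBτ : 2 ≤ B₁ * τ := by
    have hpos : (0:ℝ) < (ε₁ * η) ^ (2 ^ s) := by positivity
    have key : 2 * (ε₁ * η) ^ (2 ^ s) ≤ η * τ := by
      obtain ⟨K', hK'⟩ : ∃ K', 2 ^ s = K' + 1 :=
        ⟨2 ^ s - 1, (Nat.succ_pred_eq_of_pos (by positivity)).symm⟩
      have h1 : (2 * ε₁) ^ (2 ^ s) ≤ ε₄ ^ (2 ^ s) :=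
        pow_le_pow_left₀ (by positivity) (by linarith) _
      have h2 : (η / 2) ^ (2 ^ s - 1) ≤ m ^ (2 ^ s - 1) :=
        pow_le_pow_left₀ (by positivity) (le_max_right _ _) _
      have hid : 2 * (ε₁ * η) ^ (2 ^ s) = η * ((2 * ε₁) ^ (2 ^ s) * (η / 2) ^ (2 ^ s - 1)) := by
        rw [hK']
        simp only [Nat.add_sub_cancel]
        rw [mul_pow, mul_pow, div_pow]
        rw [pow_succ (2:ℝ) K', pow_succ ε₁ K', pow_succ η K']
        field_simp
      rw [hid, hτ_def]
      have h3 : (2 * ε₁) ^ (2 ^ s) * (η / 2) ^ (2 ^ s - 1) ≤ ε₄ ^ (2 ^ s) * m ^ (2 ^ s - 1) :=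
        mul_le_mul h1 h2 (by positivity) (by positivity)
      nlinarith [hη]
    rw [hB₁_def, show η * ((ε₁ * η) ^ (2 ^ s))⁻¹ * τ = (η * τ) / ((ε₁ * η) ^ (2 ^ s)) by ring,
      le_div_iff₀ hpos]
    linarith
  set c : ℝ := min (m⁻¹ * β) (B₁ * τ) with hc_def
  have hc0 : (0:ℝ) < c := lt_min (by positivity) (by positivity)
  have hcone : 1 ≤ c := le_min hc1 (by linarith)
  have hcβ : c ≤ m⁻¹ * β := min_le_left _ _
  have hcτ : c ≤ B₁ * τ := min_le_right _ _
  -- the sets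
  set OB : Set ((Fin s → Bool) → ZMod N → ℂ) := {F | ∀ ω x, Norm.norm (F ω x) ≤ 1}
    with hOB_def
  set S₁ : Set (ZMod N → ℂ) :=
    {u | ∃ z F, Norm.norm z ≤ B₁ ∧ F ∈ OB ∧ u = fun x => z * dualUs s F x} with hS₁_def
  set K₁ : Set (ZMod N → ℂ) := closure (convexHull ℝ S₁) with hK₁_def
  set K₂ : Set (ZMod N → ℂ) := {u | L1norm u ≤ β} with hK₂_def
  set K₃ : Set (ZMod N → ℂ) := {u | (∀ x, Norm.norm (u x) ≤ m⁻¹) ∧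
    ∀ F ∈ OB, Norm.norm (∑ x, u x * dualUs s F x) ≤ (N:ℝ) * τ} with hK₃_def
  set B : Set (ZMod N → ℂ) := K₁ + K₂ + K₃ with hB_def
  -- compactness
  have hOBc : IsCompact OB := by
    have : OB = Metric.closedBall (0 : (Fin s → Bool) → ZMod N → ℂ) 1 := by
      ext F
      rw [hOB_def, Set.mem_setOf_eq, Metric.mem_closedBall, dist_zero_right,
        pi_norm_le_iff_of_nonneg zero_le_one]
      apply forall_congr'
      intro ω
      rw [pi_norm_le_iff_of_nonneg zero_le_one]
    rw [this]
    exact isCompact_closedBall _ _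
  have hK₁c : IsCompact K₁ := by
    have hsub : convexHull ℝ S₁ ⊆ Metric.closedBall (0 : ZMod N → ℂ) B₁ := by
      apply convexHull_min ?_ (convex_closedBall _ _)
      intro u hu
      obtain ⟨z, F, hz, hF, rfl⟩ := hu
      rw [Metric.mem_closedBall, dist_zero_right, pi_norm_le_iff_of_nonneg hB₁0.le]
      intro x
      rw [norm_mul]
      calc Norm.norm z * Norm.norm (dualUs s F x) ≤ B₁ * 1 :=
            mul_le_mul hz (abs_dualUs_le_one s F hF x) (norm_nonneg _) hB₁0.le
        _ = B₁ := mul_one _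
    exact IsCompact.of_isClosed_subset (isCompact_closedBall _ _) isClosed_closure
      ((closure_minimal hsub Metric.isClosed_closedBall).trans (le_refl _))
  have hL1cont : Continuous fun u : ZMod N → ℂ => L1norm u := by
    unfold L1norm
    exact (continuous_finset_sum _ fun x _ =>
      continuous_norm.comp (continuous_apply x)).div_const _
  have hK₂cl : IsClosed K₂ := isClosed_le hL1cont continuous_const
  have hK₂c : IsCompact K₂ := by
    refine IsCompact.of_isClosed_subset (isCompact_closedBall (0 : ZMod N → ℂ) ((N:ℝ) * β))
      hK₂cl ?_
    intro u hu
    rw [Metric.mem_closedBall, dist_zero_right, pi_norm_le_iff_of_nonneg (by positivity)]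
    intro x
    have h1 : Norm.norm (u x) ≤ ∑ y, Norm.norm (u y) :=
      Finset.single_le_sum (fun y _ => norm_nonneg _) (mem_univ x)
    have h2 : (∑ y, Norm.norm (u y)) / (N:ℝ) ≤ β := hu
    rw [div_le_iff₀ hN0] at h2
    linarith
  have hK₃cl : IsClosed K₃ := by
    have : K₃ = (⋂ x : ZMod N, {u : ZMod N → ℂ | Norm.norm (u x) ≤ m⁻¹}) ∩
        ⋂ F ∈ OB, {u : ZMod N → ℂ | Norm.norm (∑ x, u x * dualUs s F x) ≤ (N:ℝ) * τ} := by
      ext u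
      simp only [hK₃_def, Set.mem_setOf_eq, Set.mem_inter_iff, Set.mem_iInter]
    rw [this]
    refine IsClosed.inter (isClosed_iInter fun x =>
        isClosed_le (continuous_norm.comp (continuous_apply x)) continuous_const)
      (isClosed_iInter fun F => isClosed_iInter fun _ =>
        isClosed_le (continuous_norm.comp
          (continuous_finset_sum _ fun x _ => (continuous_apply x).mul continuous_const))
          continuous_const)
  have hK₃c : IsCompact K₃ := by
    refine IsCompact.of_isClosed_subset (isCompact_closedBall (0 : ZMod N → ℂ) m⁻¹) hK₃cl ?_
    intro u hu
    rw [Metric.mem_closedBall, dist_zero_right, pi_norm_le_iff_of_nonneg (by positivity)]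
    intro x
    exact hu.1 x
  -- convexity
  have hK₁v : Convex ℝ K₁ := (convex_convexHull ℝ S₁).closure
  have hK₂v : Convex ℝ K₂ := by
    intro u hu v hv a b ha hb hab
    have hpt : ∀ x, Norm.norm ((a • u + b • v) x) ≤
        a * Norm.norm (u x) + b * Norm.norm (v x) := by
      intro x
      simp only [Pi.add_apply, Pi.smul_apply, Complex.real_smul]
      calc Norm.norm ((a:ℂ) * u x + (b:ℂ) * v x)
          ≤ Norm.norm ((a:ℂ) * u x) + Norm.norm ((b:ℂ) * v x) := norm_add_le _ _
        _ = a * Norm.norm (u x) + b * Norm.norm (v x) := by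
            rw [norm_mul, norm_mul, Complex.norm_real, Real.norm_eq_abs, Complex.norm_real, Real.norm_eq_abs,
              abs_of_nonneg ha, abs_of_nonneg hb]
    have hu' : (∑ y, Norm.norm (u y)) / (N:ℝ) ≤ β := hu
    have hv' : (∑ y, Norm.norm (v y)) / (N:ℝ) ≤ β := hv
    show (∑ y, Norm.norm ((a • u + b • v) y)) / (N:ℝ) ≤ β
    rw [div_le_iff₀ hN0] at hu' hv' ⊢
    calc ∑ y, Norm.norm ((a • u + b • v) y)
        ≤ ∑ y, (a * Norm.norm (u y) + b * Norm.norm (v y)) :=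
          Finset.sum_le_sum fun y _ => hpt y
      _ = a * (∑ y, Norm.norm (u y)) + b * (∑ y, Norm.norm (v y)) := by
          rw [Finset.sum_add_distrib, Finset.mul_sum, Finset.mul_sum]
      _ ≤ a * (β * N) + b * (β * N) := by
          apply add_le_add
          · exact mul_le_mul_of_nonneg_left hu' ha
          · exact mul_le_mul_of_nonneg_left hv' hb
      _ = β * N := by rw [← add_mul, hab, one_mul]
  have hK₃v : Convex ℝ K₃ := by
    intro u hu v hv a b ha hb hab
    obtain ⟨hu1, hu2⟩ := hu
    obtain ⟨hv1, hv2⟩ := hv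
    constructor
    · intro x
      simp only [Pi.add_apply, Pi.smul_apply, Complex.real_smul]
      calc Norm.norm ((a:ℂ) * u x + (b:ℂ) * v x)
          ≤ Norm.norm ((a:ℂ) * u x) + Norm.norm ((b:ℂ) * v x) := norm_add_le _ _
        _ = a * Norm.norm (u x) + b * Norm.norm (v x) := by
            rw [norm_mul, norm_mul, Complex.norm_real, Real.norm_eq_abs, Complex.norm_real, Real.norm_eq_abs,
              abs_of_nonneg ha, abs_of_nonneg hb]
        _ ≤ a * m⁻¹ + b * m⁻¹ := add_le_add (mul_le_mul_of_nonneg_left (hu1 x) ha)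
            (mul_le_mul_of_nonneg_left (hv1 x) hb)
        _ = m⁻¹ := by rw [← add_mul, hab, one_mul]
    · intro F hF
      have hsplit : ∑ x, ((a • u + b • v) x) * dualUs s F x =
          (a:ℂ) * (∑ x, u x * dualUs s F x) + (b:ℂ) * (∑ x, v x * dualUs s F x) := by
        rw [Finset.mul_sum, Finset.mul_sum, ← Finset.sum_add_distrib]
        apply Finset.sum_congr rfl
        intro x _
        simp only [Pi.add_apply, Pi.smul_apply, Complex.real_smul]
        ring
      rw [hsplit]
      calc Norm.norm ((a:ℂ) * (∑ x, u x * dualUs s F x) + (b:ℂ) * (∑ x, v x * dualUs s F x))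
          ≤ Norm.norm ((a:ℂ) * (∑ x, u x * dualUs s F x))
            + Norm.norm ((b:ℂ) * (∑ x, v x * dualUs s F x)) := norm_add_le _ _
        _ = a * Norm.norm (∑ x, u x * dualUs s F x)
            + b * Norm.norm (∑ x, v x * dualUs s F x) := by
            rw [norm_mul, norm_mul, Complex.norm_real, Real.norm_eq_abs, Complex.norm_real, Real.norm_eq_abs,
              abs_of_nonneg ha, abs_of_nonneg hb]
        _ ≤ a * ((N:ℝ) * τ) + b * ((N:ℝ) * τ) := add_le_add
            (mul_le_mul_of_nonneg_left (hu2 F hF) ha)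
            (mul_le_mul_of_nonneg_left (hv2 F hF) hb)
        _ = (N:ℝ) * τ := by rw [← add_mul, hab, one_mul]
  have hBv : Convex ℝ B := (hK₁v.add hK₂v).add hK₃v
  have hBcl : IsClosed B := ((hK₁c.add hK₂c).add hK₃c).isClosed
  -- zero memberships
  have h0S₁ : (0 : ZMod N → ℂ) ∈ S₁ := by
    refine ⟨0, fun _ _ => 0, by simpa using hB₁0.le, fun ω x => by simpa using zero_le_one, ?_⟩
    funext x
    simp
  have h0K₁ : (0 : ZMod N → ℂ) ∈ K₁ := subset_closure (subset_convexHull ℝ S₁ h0S₁)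
  have h0K₂ : (0 : ZMod N → ℂ) ∈ K₂ := by
    show L1norm (0 : ZMod N → ℂ) ≤ β
    unfold L1norm
    simp
    positivity
  have h0K₃ : (0 : ZMod N → ℂ) ∈ K₃ := by
    constructor
    · intro x; simp; positivity
    · intro F hF; simp; positivity
  have hmemB : ∀ u₁ ∈ K₁, ∀ u₂ ∈ K₂, ∀ u₃ ∈ K₃, u₁ + u₂ + u₃ ∈ B :=
    fun u₁ h1 u₂ h2 u₃ h3 => Set.add_mem_add (Set.add_mem_add h1 h2) h3
  by_cases hfB : f ∈ B
  · -- extract the decomposition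
    rw [hB_def] at hfB
    obtain ⟨v12, hv12, u₃, hu₃, hsum3⟩ := Set.mem_add.mp hfB
    obtain ⟨u₁, hu₁, u₂, hu₂, hsum2⟩ := Set.mem_add.mp hv12
    -- approximate u₁ from the convex hull
    have hη2 : (0:ℝ) < η / 2 := by linarith
    obtain ⟨u₁', hu₁', hdist⟩ := Metric.mem_closure_iff.mp hu₁ (η/2) hη2
    rw [_root_.convexHull_eq] at hu₁'
    obtain ⟨ι, t, w, zf, hw0, hw1, hzmem, hcm⟩ := hu₁'
    have hcm' : ∑ i ∈ t, w i • zf i = u₁' := by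
      rw [← hcm, Finset.centerMass, hw1, inv_one, one_smul]
    choose ζ Fa hζ hFaOB hzeq using fun i : {a // a ∈ t} => hzmem i.1 i.2
    set e := t.equivFin with he_def
    refine ⟨t.card, fun j => ((w (e.symm j).1 : ℝ) : ℂ) * ζ (e.symm j),
      fun j => Fa (e.symm j), u₂ + (u₁ - u₁'), u₃, ?_, ?_, ?_, ?_, ?_, ?_⟩
    · exact fun j ω x => hFaOB (e.symm j) ω x
    · have hu₁eq : u₁' = fun x => ∑ j : Fin t.card,
          (((w (e.symm j).1 : ℝ) : ℂ) * ζ (e.symm j)) * dualUs s (Fa (e.symm j)) x := by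
        funext x
        rw [← hcm', Finset.sum_apply]
        have step1 : ∑ i ∈ t, (w i • zf i) x = ∑ i ∈ t.attach, (w i.1 • zf i.1) x :=
          (Finset.sum_attach t fun i => (w i • zf i) x).symm
        have step2 : ∑ i ∈ t.attach, (w i.1 • zf i.1) x
            = ∑ j : Fin t.card, (w (e.symm j).1 • zf (e.symm j).1) x := by
          rw [← Finset.univ_eq_attach]
          exact (Equiv.sum_comp e.symm fun i : {a // a ∈ t} => (w i.1 • zf i.1) x).symm
        rw [step1, step2]
        apply Finset.sum_congr rfl
        intro j _
        rw [Pi.smul_apply, hzeq (e.symm j)]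
        simp only [Complex.real_smul]
        ring
      have : f = u₁' + (u₂ + (u₁ - u₁')) + u₃ := by
        rw [← hsum3, ← hsum2]
        abel
      rw [this, hu₁eq]
    · have habs : ∀ j : Fin t.card, Norm.norm (((w (e.symm j).1 : ℝ) : ℂ) * ζ (e.symm j))
          = w (e.symm j).1 * Norm.norm (ζ (e.symm j)) := by
        intro j
        rw [norm_mul, Complex.norm_real, Real.norm_eq_abs, abs_of_nonneg (hw0 _ (e.symm j).2)]
      calc ∑ j : Fin t.card, Norm.norm (((w (e.symm j).1 : ℝ) : ℂ) * ζ (e.symm j))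
          = ∑ j : Fin t.card, w (e.symm j).1 * Norm.norm (ζ (e.symm j)) :=
            Finset.sum_congr rfl fun j _ => habs j
        _ ≤ ∑ j : Fin t.card, w (e.symm j).1 * B₁ := Finset.sum_le_sum fun j _ =>
            mul_le_mul_of_nonneg_left (hζ (e.symm j)) (hw0 _ (e.symm j).2)
        _ = (∑ j : Fin t.card, w (e.symm j).1) * B₁ := by rw [← Finset.sum_mul]
        _ = 1 * B₁ := by
            congr 1
            rw [show (∑ j : Fin t.card, w (e.symm j).1)
              = ∑ i ∈ t.attach, w i.1 by
                rw [← Finset.univ_eq_attach]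
                exact Equiv.sum_comp e.symm fun i : {a // a ∈ t} => w i.1]
            rw [Finset.sum_attach t fun i => w i]
            exact hw1
        _ = η * ((ε₁ * η) ^ (2 ^ s))⁻¹ := by rw [one_mul, hB₁_def]
    · -- L1 bound
      have hd : ∀ x, Norm.norm ((u₁ - u₁') x) ≤ η / 2 := by
        intro x
        calc Norm.norm ((u₁ - u₁') x) = ‖(u₁ - u₁') x‖ := rfl
          _ ≤ ‖u₁ - u₁'‖ := norm_le_pi_norm _ x
          _ = dist u₁ u₁' := (dist_eq_norm _ _).symm
          _ ≤ η / 2 := hdist.le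
      have hsum1 : ∑ x, Norm.norm ((u₂ + (u₁ - u₁')) x)
          ≤ (∑ x, Norm.norm (u₂ x)) + ∑ x, Norm.norm ((u₁ - u₁') x) := by
        rw [← Finset.sum_add_distrib]
        apply Finset.sum_le_sum
        intro x _
        rw [Pi.add_apply]
        exact norm_add_le _ _
      have hsum2' : ∑ x, Norm.norm ((u₁ - u₁') x) ≤ (N:ℝ) * (η / 2) := by
        calc ∑ x, Norm.norm ((u₁ - u₁') x) ≤ ∑ _x : ZMod N, (η/2 : ℝ) :=
              Finset.sum_le_sum fun x _ => hd x
          _ = (N:ℝ) * (η/2) := by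
              rw [Finset.sum_const, Finset.card_univ, ZMod.card, nsmul_eq_mul]
      have hu₂' : (∑ x, Norm.norm (u₂ x)) / (N:ℝ) ≤ β := hu₂
      show (∑ x, Norm.norm ((u₂ + (u₁ - u₁')) x)) / (N:ℝ) ≤ ε₂ + η
      rw [div_le_iff₀ hN0] at hu₂' ⊢
      rw [hβ_def] at hu₂'
      linarith [hsum1, hsum2', hN0]
    · exact ciSup_le fun x => le_trans (hu₃.1 x) (by
        rw [inv_le_inv₀ hm0 hε₃]
        exact le_max_left _ _)
    · exact gowers_le s u₃ m ε₄ hm0 hε₄ hu₃.1 (fun F hF => hu₃.2 F hF)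
  · exfalso
    obtain ⟨L₀, u, hBu, hfu⟩ := geometric_hahn_banach_closed_point hBv hBcl hfB
    have hu0 : 0 < u := by
      have h0B : (0 : ZMod N → ℂ) ∈ B := by
        have := hmemB 0 h0K₁ 0 h0K₂ 0 h0K₃
        simpa using this
      have := hBu 0 h0B
      simpa using this
    obtain ⟨ψ₀, hψ₀⟩ := exists_rep L₀
    set ψ : ZMod N → ℂ := fun x => ((u⁻¹ : ℝ) : ℂ) * ψ₀ x with hψ_def
    have hL : ∀ v : ZMod N → ℂ, (∑ x, v x * ψ x).re = u⁻¹ * L₀ v := by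
      intro v
      have h1 : ∑ x, v x * ψ x = ((u⁻¹ : ℝ) : ℂ) * ∑ x, v x * ψ₀ x := by
        rw [Finset.mul_sum]
        exact Finset.sum_congr rfl fun x _ => by rw [hψ_def]; ring
      rw [h1, Complex.re_ofReal_mul, ← hψ₀ v]
    have hmem1 : ∀ v ∈ B, (∑ x, v x * ψ x).re ≤ 1 := by
      intro v hv
      rw [hL]
      calc u⁻¹ * L₀ v ≤ u⁻¹ * u :=
            mul_le_mul_of_nonneg_left (hBu v hv).le (inv_nonneg.mpr hu0.le)
        _ = 1 := inv_mul_cancel₀ hu0.ne'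
    have hfψ : 1 < (∑ x, f x * ψ x).re := by
      rw [hL, show (1:ℝ) = u⁻¹ * u by rw [inv_mul_cancel₀ hu0.ne']]
      exact mul_lt_mul_of_pos_left hfu (inv_pos.mpr hu0)
    -- the dual constraint
    have hdual : ∀ F, F ∈ OB → Norm.norm (∑ x, dualUs s F x * ψ x) ≤ B₁⁻¹ := by
      intro F hF
      apply abs_le_of_re_le _ _ (by positivity)
      intro z hz
      have hvS : (fun x => ((B₁ : ℝ) : ℂ) * z * dualUs s F x) ∈ S₁ := by
        refine ⟨((B₁ : ℝ) : ℂ) * z, F, ?_, hF, rfl⟩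
        rw [norm_mul, Complex.norm_real, Real.norm_eq_abs, abs_of_pos hB₁0]
        have hmul := mul_le_mul_of_nonneg_left hz hB₁0.le
        rw [mul_one] at hmul
        exact hmul
      have hvB : (fun x => ((B₁ : ℝ) : ℂ) * z * dualUs s F x) ∈ B := by
        have := hmemB _ (subset_closure (subset_convexHull ℝ S₁ hvS)) 0 h0K₂ 0 h0K₃
        simpa using this
      have h1 := hmem1 _ hvB
      have h2 : ∑ x, (((B₁ : ℝ) : ℂ) * z * dualUs s F x) * ψ x
          = ((B₁ : ℝ) : ℂ) * (z * ∑ x, dualUs s F x * ψ x) := by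
        rw [Finset.mul_sum, Finset.mul_sum]
        exact Finset.sum_congr rfl fun x _ => by ring
      rw [h2, Complex.re_ofReal_mul] at h1
      rw [← mul_le_mul_iff_of_pos_left hB₁0, mul_inv_cancel₀ hB₁0.ne']
      exact h1
    -- the sup-norm constraint on ψ
    have hψinf : ∀ x₀, Norm.norm (ψ x₀) ≤ ((N:ℝ) * β)⁻¹ := by
      intro x₀
      apply abs_le_of_re_le _ _ (by positivity)
      intro z hz
      set v : ZMod N → ℂ := fun y => (((N:ℝ) * β : ℝ) : ℂ) * z * (if y = x₀ then 1 else 0)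
        with hv_def
      have habsv : ∀ y, Norm.norm (v y) = if y = x₀ then (N:ℝ) * β * Norm.norm z else 0 := by
        intro y
        rw [hv_def]
        beta_reduce
        by_cases hy : y = x₀
        · rw [if_pos hy, if_pos hy, mul_one, norm_mul, Complex.norm_real, Real.norm_eq_abs,
            abs_of_pos (by positivity)]
        · rw [if_neg hy, if_neg hy, mul_zero, norm_zero]
      have hvK₂ : v ∈ K₂ := by
        show L1norm v ≤ β
        unfold L1norm
        rw [Finset.sum_congr rfl fun y _ => habsv y, Finset.sum_ite_eq' univ x₀ _,
          if_pos (mem_univ x₀), div_le_iff₀ hN0]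
        have hmul := mul_le_mul_of_nonneg_left hz (show (0:ℝ) ≤ (N:ℝ) * β by positivity)
        rw [mul_one] at hmul
        linarith
      have hvB : v ∈ B := by
        have := hmemB 0 h0K₁ v hvK₂ 0 h0K₃
        simpa using this
      have h1 := hmem1 v hvB
      have h2 : ∑ y, v y * ψ y = (((N:ℝ) * β : ℝ) : ℂ) * (z * ψ x₀) := by
        rw [hv_def, Finset.sum_eq_single x₀]
        · beta_reduce
          rw [if_pos rfl, mul_one]; ring
        · intro b _ hb
          beta_reduce
          rw [if_neg hb, mul_zero, zero_mul]
        · intro hx; exact absurd (mem_univ x₀) hx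
      rw [h2, Complex.re_ofReal_mul] at h1
      rw [← mul_le_mul_iff_of_pos_left (show (0:ℝ) < (N:ℝ) * β by positivity),
        mul_inv_cancel₀ (show ((N:ℝ) * β) ≠ 0 by positivity)]
      exact h1
    -- the witness
    set gw : ZMod N → ℂ := fun x => ((c * N : ℝ) : ℂ) * (starRingEnd ℂ) (ψ x) with hgw_def
    have hgwK₃ : gw ∈ K₃ := by
      constructor
      · intro x
        rw [hgw_def]
        simp only
        rw [norm_mul, Complex.norm_real, Real.norm_eq_abs, abs_of_pos (by positivity), Complex.norm_conj]
        calc c * (N:ℝ) * Norm.norm (ψ x) ≤ c * (N:ℝ) * ((N:ℝ) * β)⁻¹ :=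
              mul_le_mul_of_nonneg_left (hψinf x) (by positivity)
          _ = c / β := by field_simp
          _ ≤ m⁻¹ := by
              rw [div_le_iff₀ hβ0]
              exact hcβ
      · intro F hF
        have hF' : (fun ω y => (starRingEnd ℂ) (F ω y)) ∈ OB := by
          intro ω x
          rw [Complex.norm_conj]
          exact hF ω x
        have h2 : ∑ x, gw x * dualUs s F x
            = ((c * N : ℝ) : ℂ) * (starRingEnd ℂ)
              (∑ x, dualUs s (fun ω y => (starRingEnd ℂ) (F ω y)) x * ψ x) := by
          rw [map_sum, Finset.mul_sum]
          apply Finset.sum_congr rfl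
          intro x _
          have e1 : (starRingEnd ℂ) (dualUs s (fun ω y => (starRingEnd ℂ) (F ω y)) x * ψ x)
              = dualUs s F x * (starRingEnd ℂ) (ψ x) := by
            rw [map_mul, conj_dualUs]
            simp only [Complex.conj_conj]
          rw [e1, hgw_def]
          beta_reduce
          ring
        rw [h2, norm_mul, Complex.norm_real, Real.norm_eq_abs, abs_of_pos (by positivity), Complex.norm_conj]
        calc c * (N:ℝ) * Norm.norm (∑ x, dualUs s (fun ω y => (starRingEnd ℂ) (F ω y)) x * ψ x)
            ≤ c * (N:ℝ) * B₁⁻¹ := mul_le_mul_of_nonneg_left (hdual _ hF') (by positivity)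
          _ ≤ (N:ℝ) * τ := by
              rw [show c * (N:ℝ) * B₁⁻¹ = c * (N:ℝ) / B₁ by ring, div_le_iff₀ hB₁0]
              nlinarith [hcτ, hN0]
    have hgwB : gw ∈ B := by
      have := hmemB 0 h0K₁ 0 h0K₂ gw hgwK₃
      simpa using this
    have hgw1 := hmem1 gw hgwB
    set Pψ : ℝ := ∑ x, Complex.normSq (ψ x) with hPψ_def
    have hPψ0 : 0 ≤ Pψ := Finset.sum_nonneg fun x _ => Complex.normSq_nonneg _
    have hgw1' : c * (N:ℝ) * Pψ ≤ 1 := by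
      have h2 : ∑ x, gw x * ψ x = ((c * N : ℝ) : ℂ) * ((Pψ : ℝ) : ℂ) := by
        rw [hPψ_def]
        push_cast
        rw [Finset.mul_sum]
        apply Finset.sum_congr rfl
        intro x _
        rw [hgw_def]
        beta_reduce
        rw [show ((c * N : ℝ) : ℂ) * (starRingEnd ℂ) (ψ x) * ψ x
          = ((c * N : ℝ) : ℂ) * (ψ x * (starRingEnd ℂ) (ψ x)) by ring, Complex.mul_conj]
        push_cast
        ring
      rw [h2] at hgw1
      rw [show (((c * N : ℝ)) : ℂ) * ((Pψ : ℝ) : ℂ) = (((c * N * Pψ : ℝ)) : ℂ) by push_cast; ring]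
        at hgw1
      rw [Complex.ofReal_re] at hgw1
      linarith [hgw1]
    -- Cauchy-Schwarz
    have hfsum : 1 < ∑ x, Norm.norm (f x) * Norm.norm (ψ x) := by
      calc (1:ℝ) < (∑ x, f x * ψ x).re := hfψ
        _ ≤ Norm.norm (∑ x, f x * ψ x) := Complex.re_le_norm _
        _ ≤ ∑ x, Norm.norm (f x * ψ x) := norm_sum_le _ _
        _ = ∑ x, Norm.norm (f x) * Norm.norm (ψ x) :=
            Finset.sum_congr rfl fun x _ => norm_mul _ _
    have hCS : (∑ x, Norm.norm (f x) * Norm.norm (ψ x)) ^ 2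
        ≤ (∑ x, Norm.norm (f x) ^ 2) * ∑ x, Norm.norm (ψ x) ^ 2 :=
      Finset.sum_mul_sq_le_sq_mul_sq _ _ _
    have hPψeq : ∑ x, Norm.norm (ψ x) ^ 2 = Pψ :=
      Finset.sum_congr rfl fun x _ => Complex.sq_norm _
    have hfN : ∑ x, Norm.norm (f x) ^ 2 ≤ (N:ℝ) := by
      have h1 : Real.sqrt ((∑ x, Norm.norm (f x) ^ 2) / (N:ℝ)) ≤ 1 := hf
      have h2 : (∑ x, Norm.norm (f x) ^ 2) / (N:ℝ) ≤ 1 := by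
        nlinarith [Real.sq_sqrt (show (0:ℝ) ≤ (∑ x, Norm.norm (f x) ^ 2) / (N:ℝ) by positivity),
          Real.sqrt_nonneg ((∑ x, Norm.norm (f x) ^ 2) / (N:ℝ))]
      rw [div_le_one hN0] at h2
      exact h2
    have hNP : 1 < (N:ℝ) * Pψ := by
      have hfnn : (0:ℝ) ≤ ∑ x, Norm.norm (f x) ^ 2 :=
        Finset.sum_nonneg fun x _ => sq_nonneg _
      nlinarith [hfsum, hCS, hfN, hPψ0, hPψeq]
    nlinarith [hgw1', hNP, hcone, hc0]


end
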